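/- Let S : ℝ³ → ℝ³ be a linear isometry with det S = 1 and S ≠ id, let L = {v ∈ ℝ³ : S(v) = v} (which is a 1-dimensional subspace, the axis direction of the rotation S), let c ∈ ℝ³, and define s : ℝ³ → ℝ³ by s(x) = S(x) + c. Assume s has no fixed point. Then the set Ax = {x ∈ ℝ³ : s(x) − x ∈ L} is a nonempty affine line whose direction is L, and the map x ↦ s(x) − x is constant on Ax, its value being the orthogonal projection of c onto L, which is nonzero. -/

import Mathlib

open Module Matrix
open scoped RealInnerProductSpace

private lemma screw_det_aux
    (S : EuclideanSpace ℝ (Fin 3) ≃ₗᵢ[ℝ] EuclideanSpace ℝ (Fin 3))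
    (hdet : LinearMap.det (S.toLinearEquiv.toLinearMap) = 1) :
    LinearMap.det (S.toLinearEquiv.toLinearMap - LinearMap.id) = 0 := by
  classical
  set T := S.toLinearEquiv.toLinearMap with hT
  let b := EuclideanSpace.basisFun (Fin 3) ℝ
  set M := LinearMap.toMatrix b.toBasis b.toBasis T with hM
  have h1 : M = b.toBasis.toMatrix ⇑(b.map S) := by
    ext i j
    rw [hM, LinearMap.toMatrix_apply, Basis.toMatrix_apply]
    simp [b, hT]
  have hMU : M * Mᴴ = 1 := by
    rw [h1]; exact b.toMatrix_orthonormalBasis_self_mul_conjTranspose (b.map S)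
  have hMdet : M.det = 1 := by rw [hM, LinearMap.det_toMatrix]; exact hdet
  have key : (M - 1).det = 0 := by
    have e1 : M - 1 = M * (1 - Mᴴ) := by rw [Matrix.mul_sub, Matrix.mul_one, hMU]
    have e2 : (1 - Mᴴ) = ((1 : Matrix (Fin 3) (Fin 3) ℝ) - M)ᴴ := by
      rw [Matrix.conjTranspose_sub, Matrix.conjTranspose_one]
    have h3 : (M - 1).det = - (M - 1).det := by
      calc (M - 1).det = M.det * (1 - Mᴴ).det := by rw [e1, Matrix.det_mul]
        _ = ((1 : Matrix (Fin 3) (Fin 3) ℝ) - M).det := by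
            rw [hMdet, one_mul, e2, Matrix.det_conjTranspose, star_trivial]
        _ = - (M - 1).det := by
            rw [← neg_sub M 1, Matrix.det_neg]
            norm_num
    linarith
  rw [← LinearMap.det_toMatrix b.toBasis, map_sub, LinearMap.toMatrix_id]
  exact key

theorem screw_motion_axis
    (S : EuclideanSpace ℝ (Fin 3) ≃ₗᵢ[ℝ] EuclideanSpace ℝ (Fin 3))
    (hdet : LinearMap.det (S.toLinearEquiv.toLinearMap) = 1)
    (hS : S ≠ LinearIsometryEquiv.refl ℝ (EuclideanSpace ℝ (Fin 3)))
    (L : Submodule ℝ (EuclideanSpace ℝ (Fin 3)))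
    (hL : ∀ v, v ∈ L ↔ S v = v)
    (c : EuclideanSpace ℝ (Fin 3))
    (s : EuclideanSpace ℝ (Fin 3) → EuclideanSpace ℝ (Fin 3))
    (hs : ∀ x, s x = S x + c)
    (hnofix : ∀ x, s x ≠ x) :
    Module.finrank ℝ L = 1 ∧
    (∃ x₀ ∈ {x : EuclideanSpace ℝ (Fin 3) | s x - x ∈ L},
        {x : EuclideanSpace ℝ (Fin 3) | s x - x ∈ L} =
          (fun v => x₀ + v) '' (L : Set (EuclideanSpace ℝ (Fin 3)))) ∧
    (∀ x ∈ {x : EuclideanSpace ℝ (Fin 3) | s x - x ∈ L},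
        s x - x = (Submodule.orthogonalProjectionOnto L c : EuclideanSpace ℝ (Fin 3))) ∧
    (Submodule.orthogonalProjectionOnto L c : EuclideanSpace ℝ (Fin 3)) ≠ 0 := by
  classical
  set T := S.toLinearEquiv.toLinearMap with hT
  have hTapp : ∀ x, T x = S x := fun x => rfl
  have hSL : ∀ v ∈ L, S v = v := fun v hv => (hL v).mp hv
  -- L is nontrivial
  have hker : LinearMap.ker (T - LinearMap.id) = L := by
    ext v
    rw [LinearMap.mem_ker, LinearMap.sub_apply, LinearMap.id_apply, sub_eq_zero, hL]
    exact Iff.rfl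
  have hLbot : L ≠ ⊥ := by
    have h := LinearMap.bot_lt_ker_of_det_eq_zero (screw_det_aux S hdet)
    rw [hker] at h
    exact bot_lt_iff_ne_bot.mp h
  -- S preserves Lᗮ
  have hSperp : ∀ w ∈ Lᗮ, S w ∈ Lᗮ := by
    intro w hw
    rw [Submodule.mem_orthogonal]
    intro u hu
    have h1 : (inner ℝ u (S w) : ℝ) = inner ℝ (S u) (S w) := by rw [hSL u hu]
    rw [h1, LinearIsometryEquiv.inner_map_map]
    exact (Submodule.mem_orthogonal L w).mp hw u hu
  have hLperp0 : ∀ x, x ∈ L → x ∈ Lᗮ → x = 0 := by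
    intro x h1 h2
    have := (Submodule.mem_orthogonal L x).mp h2 x h1
    rwa [inner_self_eq_zero] at this
  -- finrank L = 1
  have hfE : finrank ℝ (EuclideanSpace ℝ (Fin 3)) = 3 := finrank_euclideanSpace_fin
  have hsum : finrank ℝ L + finrank ℝ Lᗮ = 3 := by
    rw [L.finrank_add_finrank_orthogonal, hfE]
  have hne0 : finrank ℝ L ≠ 0 := fun h => hLbot (Submodule.finrank_eq_zero.mp h)
  have hne3 : finrank ℝ L ≠ 3 := by
    intro h
    have htop : L = ⊤ := Submodule.eq_top_of_finrank_eq (by rw [h, hfE])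
    apply hS
    apply LinearIsometryEquiv.ext
    intro x
    show S x = x
    exact hSL x (by rw [htop]; trivial)
  have hne2 : finrank ℝ L ≠ 2 := by
    intro h2
    have hperp1 : finrank ℝ Lᗮ = 1 := by omega
    obtain ⟨w, hw0, hwspan⟩ := finrank_eq_one_iff'.mp hperp1
    obtain ⟨a, ha⟩ := hwspan ⟨S w, hSperp w w.2⟩
    have hwne : ‖(w : EuclideanSpace ℝ (Fin 3))‖ ≠ 0 := by
      simpa [norm_eq_zero, Submodule.coe_eq_zero] using hw0
    have hnorm : |a| * ‖(w : EuclideanSpace ℝ (Fin 3))‖ = ‖(w : EuclideanSpace ℝ (Fin 3))‖ := by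
      have := congrArg (fun z : Lᗮ => ‖(z : EuclideanSpace ℝ (Fin 3))‖) ha
      simpa [norm_smul, LinearIsometryEquiv.norm_map] using this
    have ha1 : a = 1 ∨ a = -1 := by
      have habs : |a| = 1 := mul_right_cancel₀ hwne (by rw [hnorm, one_mul])
      exact (abs_eq (by norm_num : (0:ℝ) ≤ 1)).mp habs
    have hSw : S (w : EuclideanSpace ℝ (Fin 3)) = a • (w : EuclideanSpace ℝ (Fin 3)) := by
      have := congrArg (Subtype.val) ha
      simpa using this.symm
    rcases ha1 with h1 | h1
    · rw [h1, one_smul] at hSw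
      have : (w : EuclideanSpace ℝ (Fin 3)) ∈ L := (hL _).mpr hSw
      exact hw0 (Subtype.ext (hLperp0 _ this w.2))
    · -- S is the reflection in L
      have hneg : ∀ u ∈ Lᗮ, S u = -u := by
        intro u hu
        obtain ⟨t, ht⟩ := hwspan ⟨u, hu⟩
        have hu' : u = t • (w : EuclideanSpace ℝ (Fin 3)) := by
          have := congrArg Subtype.val ht
          simpa using this.symm
        rw [hu', LinearIsometryEquiv.map_smul, hSw, h1]
        module
      have hrefl : T = (L.reflection).toLinearMap := by
        apply LinearMap.ext
        intro x
        obtain ⟨y, hy, z, hz, hxyz⟩ := L.exists_add_mem_mem_orthogonal x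
        rw [hxyz]
        have hTx : T (y + z) = y + -z := by
          rw [hTapp, map_add, hSL y hy, hneg z hz]
        rw [hTx]
        have : L.reflection (y + z) = y + -z := by
          rw [map_add, Submodule.reflection_mem_subspace_eq_self hy,
            Submodule.reflection_mem_subspace_orthogonalComplement_eq_neg hz]
        exact this.symm
      have h5 : LinearMap.det T = -1 := by
        rw [hrefl, Submodule.det_reflection, hperp1, pow_one]
      rw [hdet] at h5
      norm_num at h5
  have hfr : finrank ℝ L = 1 := by omega
  -- the restricted map id - T on Lᗮ is bijective
  let g : EuclideanSpace ℝ (Fin 3) →ₗ[ℝ] EuclideanSpace ℝ (Fin 3) := LinearMap.id - T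
  have hgapp : ∀ x, g x = x - T x := fun x => rfl
  have hpres : ∀ x ∈ Lᗮ, g x ∈ Lᗮ := by
    intro x hx
    rw [hgapp]
    exact Lᗮ.sub_mem hx (hSperp x hx)
  let f : Lᗮ →ₗ[ℝ] Lᗮ := g.restrict hpres
  have hfinj : Function.Injective f := by
    rw [← LinearMap.ker_eq_bot]
    apply LinearMap.ker_eq_bot'.mpr
    intro m hm
    have h1 : (m : EuclideanSpace ℝ (Fin 3)) - T m = 0 := by
      have := congrArg Subtype.val hm
      rwa [LinearMap.restrict_coe_apply, hgapp] at this
    have h2 : (m : EuclideanSpace ℝ (Fin 3)) ∈ L := by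
      rw [hL, ← hTapp]
      rw [sub_eq_zero] at h1
      exact h1.symm
    exact Subtype.ext (hLperp0 _ h2 m.2)
  have hfsurj : Function.Surjective f := LinearMap.injective_iff_surjective.mp hfinj
  set p : EuclideanSpace ℝ (Fin 3) := (Submodule.orthogonalProjectionOnto L c : EuclideanSpace ℝ (Fin 3))
    with hp
  have hpL : p ∈ L := Submodule.coe_mem _
  have hcp : c - p ∈ Lᗮ := L.sub_starProjection_mem_orthogonal c
  obtain ⟨y, hy⟩ := hfsurj ⟨c - p, hcp⟩
  have h0 : (y : EuclideanSpace ℝ (Fin 3)) - T y = c - p := by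
    have := congrArg Subtype.val hy
    rwa [LinearMap.restrict_coe_apply, hgapp] at this
  have hx₀ : s (y : EuclideanSpace ℝ (Fin 3)) - y = p := by
    rw [hs]
    have h1 : S (y : EuclideanSpace ℝ (Fin 3)) =
        (y : EuclideanSpace ℝ (Fin 3)) - (c - p) := by
      rw [← hTapp, ← h0]; abel
    rw [h1]; abel
  -- constancy on the axis
  have hconst : ∀ x : EuclideanSpace ℝ (Fin 3),
      x - (y : EuclideanSpace ℝ (Fin 3)) ∈ L → s x - x = p := by
    intro x hxL
    have e : S x - S (y : EuclideanSpace ℝ (Fin 3)) = x - y := by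
      rw [← map_sub]; exact hSL _ hxL
    have hx₀' : S (y : EuclideanSpace ℝ (Fin 3)) + c - y = p := by
      rw [← hs]; exact hx₀
    rw [hs]
    have hSx : S x = (x - (y : EuclideanSpace ℝ (Fin 3))) + S y := eq_add_of_sub_eq e
    rw [hSx]
    calc (x - (y : EuclideanSpace ℝ (Fin 3))) + S y + c - x
        = S (y : EuclideanSpace ℝ (Fin 3)) + c - y := by abel
      _ = p := hx₀'
  -- membership in the axis forces x - y ∈ L
  have hmem : ∀ x : EuclideanSpace ℝ (Fin 3),
      s x - x ∈ L → x - (y : EuclideanSpace ℝ (Fin 3)) ∈ L := by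
    intro x hx
    obtain ⟨zL, hzL, zP, hzP, hsplit⟩ :=
      L.exists_add_mem_mem_orthogonal (x - (y : EuclideanSpace ℝ (Fin 3)))
    have hd : S zP - zP ∈ L := by
      have h1 : (s x - x) - (s (y : EuclideanSpace ℝ (Fin 3)) - y) ∈ L :=
        L.sub_mem hx (by rw [hx₀]; exact hpL)
      have e3 : S x - S (y : EuclideanSpace ℝ (Fin 3)) = zL + S zP := by
        rw [← map_sub, hsplit, map_add, hSL zL hzL]
      have h2 : (s x - x) - (s (y : EuclideanSpace ℝ (Fin 3)) - y) = S zP - zP := by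
        rw [hs, hs]
        calc (S x + c - x) - (S (y : EuclideanSpace ℝ (Fin 3)) + c - y)
            = (S x - S (y : EuclideanSpace ℝ (Fin 3))) -
              (x - (y : EuclideanSpace ℝ (Fin 3))) := by abel
          _ = (zL + S zP) - (zL + zP) := by rw [e3, ← hsplit]
          _ = S zP - zP := by abel
      rwa [h2] at h1
    have hdperp : S zP - zP ∈ Lᗮ := Lᗮ.sub_mem (hSperp zP hzP) hzP
    have h00 : S zP - zP = 0 := hLperp0 _ hd hdperp
    have hzPL : zP ∈ L := (hL zP).mpr (by rwa [sub_eq_zero] at h00)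
    have hzP0 : zP = 0 := hLperp0 zP hzPL hzP
    rw [hsplit, hzP0, add_zero]
    exact hzL
  refine ⟨hfr, ⟨(y : EuclideanSpace ℝ (Fin 3)), ?_, ?_⟩, ?_, ?_⟩
  · show s (y : EuclideanSpace ℝ (Fin 3)) - y ∈ L
    rw [hx₀]; exact hpL
  · ext x
    simp only [Set.mem_setOf_eq, Set.mem_image, SetLike.mem_coe]
    constructor
    · intro hx
      exact ⟨x - (y : EuclideanSpace ℝ (Fin 3)), hmem x hx, by abel⟩
    · rintro ⟨v, hv, rfl⟩
      have hxy : ((y : EuclideanSpace ℝ (Fin 3)) + v) - y ∈ L := by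
        simpa using hv
      rw [hconst _ hxy]
      exact hpL
  · intro x hx
    exact hconst x (hmem x hx)
  · intro hp0
    apply hnofix (y : EuclideanSpace ℝ (Fin 3))
    have : s (y : EuclideanSpace ℝ (Fin 3)) - y = 0 := by rw [hx₀]; exact hp0
    rwa [sub_eq_zero] at this
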